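/- Let n, m : ℕ, P : Fin n → α → Prop, Q : Fin m → α → Prop, and let ⪯ be any linear order on Fin n × Fin m that extends the componentwise product order (i.e., i ≤ i' and j ≤ j' imply (i, j) ⪯ (i', j')). Fix x : α such that P i x holds for some i and Q j x holds for some j. Then the ⪯-least element of the set S(x) = {(i, j) | P i x ∧ Q j x} is the pair (i*, j*), where i* is the least index with P i* x and j* is the least index with Q j* x. In particular, the first satisfied combined rule is the same for every linear order extending the product order. -/
import Mathlib

/-- When combining two decision lists with rule bodies `P : Fin n → α → Prop` and
`Q : Fin m → α → Prop`, let `L` be any linear order on `Fin n × Fin m` extending the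
componentwise product order.  Fix `x` such that some `P i x` and some `Q j x` hold,
and let `i*` (resp. `j*`) be the least index with `P i* x` (resp. `Q j* x`).  Then
`(i*, j*)` is the `L`-least element of `{(i, j) | P i x ∧ Q j x}`; in particular the
first satisfied combined rule is the same for every linear order extending the product
order. -/
theorem least_combined_rule_independent_of_linearization
    {α : Type*} {n m : ℕ} (P : Fin n → α → Prop) (Q : Fin m → α → Prop)
    (L : LinearOrder (Fin n × Fin m))
    (hL : ∀ (i i' : Fin n) (j j' : Fin m), i ≤ i' → j ≤ j' → L.le (i, j) (i', j'))
    (x : α)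
    (htotP : ∃ i, P i x) (htotQ : ∃ j, Q j x)
    (istar : Fin n) (jstar : Fin m)
    (histar : P istar x ∧ ∀ k < istar, ¬ P k x)
    (hjstar : Q jstar x ∧ ∀ k < jstar, ¬ Q k x) :
    (P istar x ∧ Q jstar x) ∧
      ∀ p : Fin n × Fin m, P p.1 x ∧ Q p.2 x → L.le (istar, jstar) p := by
  refine ⟨⟨histar.1, hjstar.1⟩, ?_⟩
  rintro ⟨i, j⟩ ⟨hPi, hQj⟩
  have h1 : istar ≤ i := le_of_not_gt fun h => histar.2 i h hPi
  have h2 : jstar ≤ j := le_of_not_gt fun h => hjstar.2 j h hQj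
  exact hL _ _ _ _ h1 h2
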